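/- arXiv:1511.08282 — 3 statements merged into one kernel-verified Lean document; each statement's English description precedes it below -/
import Mathlib

section
/- Let F_c, F_e : V → ℝ be convex differentiable functions on a real inner product space V, and set F = F_c − F_e. Then for all φ, ψ ∈ V: F(φ) − F(ψ) ≤ ⟨∇F_c(φ) − ∇F_e(ψ), φ − ψ⟩. -/
open scoped RealInnerProductSpace

lemma grad_inequality {V : Type*} [NormedAddCommGroup V]
    [InnerProductSpace ℝ V] [CompleteSpace V] (f : V → ℝ) (g : V → V)
    (hf : ConvexOn ℝ Set.univ f) (hg : ∀ x, HasGradientAt f (g x) x)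
    (x y : V) : ⟪g x, y - x⟫ ≤ f y - f x := by
  by_cases hxy : y = x
  · simp [hxy]
  · set h : ℝ → ℝ := fun t => f (x + t • (y - x)) with hh
    have hconv : ConvexOn ℝ Set.univ h := by
      have := hf.comp_affineMap (AffineMap.lineMap x y)
      have heq : h = f ∘ (AffineMap.lineMap x y) := by
        funext t
        simp [hh, AffineMap.lineMap_apply, add_comm]
      rw [heq, ← Set.preimage_univ (f := (AffineMap.lineMap x y))]
      exact this
    have hderiv : HasDerivAt h ⟪g x, y - x⟫ 0 := by
      have h1 : HasDerivAt (fun t : ℝ => x + t • (y - x)) (y - x) 0 := by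
        simpa using ((hasDerivAt_id (0:ℝ)).smul_const (y - x)).const_add x
      have h2 : HasFDerivAt f ((innerSL ℝ) (g x)) x := (hg x).hasFDerivAt
      have h3 : HasFDerivAt f ((innerSL ℝ) (g x)) (x + (0:ℝ) • (y - x)) := by
        simpa using h2
      exact (by simpa using h3.comp_hasDerivAt 0 h1 :
        HasDerivAt (f ∘ fun t : ℝ => x + t • (y - x)) ⟪g x, y - x⟫ 0)
    have := hconv.le_slope_of_hasDerivAt (Set.mem_univ 0) (Set.mem_univ 1)
      one_pos hderiv
    simpa [hh, slope_def_field] using this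

theorem convex_splitting_estimate {V : Type*} [NormedAddCommGroup V]
    [InnerProductSpace ℝ V] [CompleteSpace V]
    (Fc Fe : V → ℝ) (gc ge : V → V)
    (hFc : ConvexOn ℝ Set.univ Fc) (hFe : ConvexOn ℝ Set.univ Fe)
    (hgc : ∀ x, HasGradientAt Fc (gc x) x) (hge : ∀ x, HasGradientAt Fe (ge x) x)
    (φ ψ : V) :
    (Fc φ - Fe φ) - (Fc ψ - Fe ψ) ≤ ⟪gc φ - ge ψ, φ - ψ⟫ := by
  have h1 : ⟪gc φ, ψ - φ⟫ ≤ Fc ψ - Fc φ := grad_inequality Fc gc hFc hgc φ ψ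
  have h2 : ⟪ge ψ, φ - ψ⟫ ≤ Fe φ - Fe ψ := grad_inequality Fe ge hFe hge ψ φ
  have e1 : ⟪gc φ, ψ - φ⟫ = -⟪gc φ, φ - ψ⟫ := by
    rw [← inner_neg_right, neg_sub]
  rw [inner_sub_left]
  rw [e1] at h1
  linarith
end

section
/- Let L be a symmetric positive definite linear operator on a finite-dimensional real inner product space V, let F = F_c − F_e be a convex splitting with F_c, F_e convex and differentiable, and fix φᵏ ∈ V, s > 0. Then the convex-splitting scheme φᵏ⁺¹ = φᵏ − sL(∇F_c(φᵏ⁺¹) − ∇F_e(φᵏ)) (with L = −Δ_h interpreted as positive definite generator) satisfies the energy decay F(φᵏ⁺¹) ≤ F(φᵏ) for any s > 0. -/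
open scoped RealInnerProductSpace

lemma gradient_ineq_of_convexOn {V : Type*} [NormedAddCommGroup V]
    [InnerProductSpace ℝ V] [CompleteSpace V] {f : V → ℝ} {g : V} {x y : V}
    (hf : ConvexOn ℝ Set.univ f) (hg : HasGradientAt f g x) :
    ⟪g, y - x⟫ ≤ f y - f x := by
  rcases eq_or_ne y x with rfl | hxy
  · simp
  · set c : ℝ →ᵃ[ℝ] V := AffineMap.lineMap x y with hc
    have hconv : ConvexOn ℝ Set.univ (f ∘ c) := by
      have := hf.comp_affineMap c
      simpa using this
    have hderiv : HasDerivAt (f ∘ c) ⟪g, y - x⟫ 0 := by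
      have hline : HasDerivAt (fun t : ℝ => c t) (y - x) 0 := by
        have : (fun t : ℝ => c t) = fun t : ℝ => t • (y - x) + x := by
          funext t
          simp only [hc, AffineMap.lineMap_apply, vsub_eq_sub, vadd_eq_add]
        rw [this]
        simpa using (hasDerivAt_id (0:ℝ)).smul_const (y - x) |>.add_const x
      have h0 : c (0:ℝ) = x := by simp [hc]
      have hfd : HasFDerivAt f (InnerProductSpace.toDual ℝ V g : V →L[ℝ] ℝ) (c 0) := by
        rw [h0]; exact hg.hasFDerivAt
      have := hfd.comp_hasDerivAt 0 hline
      simpa [InnerProductSpace.toDual] using this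
    have hslope := hconv.le_slope_of_hasDerivAt (Set.mem_univ (0:ℝ))
      (Set.mem_univ (1:ℝ)) one_pos hderiv
    have : slope (f ∘ c) 0 1 = f y - f x := by
      simp [slope_def_field, hc]
    linarith [hslope, this ▸ hslope]

theorem convex_splitting_scheme_energy_decay {V : Type*} [NormedAddCommGroup V]
    [InnerProductSpace ℝ V] [FiniteDimensional ℝ V]
    (L : V →ₗ[ℝ] V)
    (hsym : ∀ x y : V, ⟪L x, y⟫ = ⟪x, L y⟫)
    (hpos : ∀ x : V, x ≠ 0 → 0 < ⟪L x, x⟫)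
    (Fc Fe : V → ℝ) (gc ge : V → V)
    (hFc : ConvexOn ℝ Set.univ Fc) (hFe : ConvexOn ℝ Set.univ Fe)
    (hgc : ∀ x, HasGradientAt Fc (gc x) x) (hge : ∀ x, HasGradientAt Fe (ge x) x)
    (s : ℝ) (hs : 0 < s) (φk φk1 : V)
    (hscheme : φk1 = φk - s • L (gc φk1 - ge φk)) :
    Fc φk1 - Fe φk1 ≤ Fc φk - Fe φk := by
  set μ := gc φk1 - ge φk with hμ
  have h1 : ⟪gc φk1, φk - φk1⟫ ≤ Fc φk - Fc φk1 := gradient_ineq_of_convexOn hFc (hgc φk1)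
  have h2 : ⟪ge φk, φk1 - φk⟫ ≤ Fe φk1 - Fe φk := gradient_ineq_of_convexOn hFe (hge φk)
  have hdiff : φk1 - φk = -(s • L μ) := by rw [hscheme]; abel
  have key : Fc φk1 - Fe φk1 - (Fc φk - Fe φk) ≤ ⟪μ, φk1 - φk⟫ := by
    have : ⟪μ, φk1 - φk⟫ = ⟪gc φk1, φk1 - φk⟫ - ⟪ge φk, φk1 - φk⟫ := by
      rw [hμ, inner_sub_left]
    have h1' : -⟪gc φk1, φk1 - φk⟫ ≤ Fc φk - Fc φk1 := by
      rw [← inner_neg_right]; simpa using h1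
    linarith
  have hLμ : ⟪μ, φk1 - φk⟫ = -(s * ⟪L μ, μ⟫) := by
    rw [hdiff, inner_neg_right, inner_smul_right, real_inner_comm]
  have hnn : 0 ≤ ⟪L μ, μ⟫ := by
    rcases eq_or_ne μ 0 with h | h
    · simp [h]
    · exact (hpos μ h).le
  nlinarith [key, hLμ]
end

section
/- The discrete energy F(φ) = h_x h_y Σ_{i,j} [S(φ_{ij}) + H(φ_{ij}) + κ(φ_{ij})(a_x((D_xφ)²)_{ij} + a_y((D_yφ)²)_{ij})] admits a convex splitting F = F_c − F_e, where F_c(φ) = h_x h_y Σ_{i,j} [S(φ_{ij}) + κ(φ_{ij})(a_x((D_xφ)²)_{ij} + a_y((D_yφ)²)_{ij})] and F_e(φ) = −h_x h_y Σ_{i,j} H(φ_{ij}) are both convex on the set of periodic grid functions taking values in (0, 1/ρ). -/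
open Finset

/-- center-to-edge difference in x: value at edge (i+1/2, j). -/
noncomputable def Dx (hx : ℝ) (φ : ℤ → ℤ → ℝ) (i j : ℤ) : ℝ := (φ (i+1) j - φ i j) / hx

/-- center-to-edge difference in y: value at edge (i, j+1/2). -/
noncomputable def Dy (hy : ℝ) (φ : ℤ → ℤ → ℝ) (i j : ℤ) : ℝ := (φ i (j+1) - φ i j) / hy

/-- edge-to-center difference in x (edge function `f i j` lives at (i+1/2, j)). -/
noncomputable def dX (hx : ℝ) (f : ℤ → ℤ → ℝ) (i j : ℤ) : ℝ := (f i j - f (i-1) j) / hx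

/-- edge-to-center difference in y (edge function `g i j` lives at (i, j+1/2)). -/
noncomputable def dY (hy : ℝ) (g : ℤ → ℤ → ℝ) (i j : ℤ) : ℝ := (g i j - g i (j-1)) / hy

/-- edge-to-center average in x. -/
noncomputable def aX (f : ℤ → ℤ → ℝ) (i j : ℤ) : ℝ := (f i j + f (i-1) j) / 2

/-- edge-to-center average in y. -/
noncomputable def aY (g : ℤ → ℤ → ℝ) (i j : ℤ) : ℝ := (g i j + g i (j-1)) / 2

/-- discrete Laplacian. -/
noncomputable def lapH (hx hy : ℝ) (φ : ℤ → ℤ → ℝ) (i j : ℤ) : ℝ :=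
  dX hx (Dx hx φ) i j + dY hy (Dy hy φ) i j

/-- cell-centered weighted inner product. -/
noncomputable def ipH (m n : ℤ) (hx hy : ℝ) (φ ψ : ℤ → ℤ → ℝ) : ℝ :=
  hx * hy * ∑ i ∈ Icc (1:ℤ) m, ∑ j ∈ Icc (1:ℤ) n, φ i j * ψ i j

/-- east-west edge-centered weighted inner product. -/
noncomputable def ipEW (m n : ℤ) (hx hy : ℝ) (f g : ℤ → ℤ → ℝ) : ℝ :=
  hx * hy * ∑ i ∈ Icc (1:ℤ) m, ∑ j ∈ Icc (1:ℤ) n, aX (fun i j => f i j * g i j) i j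

/-- north-south edge-centered weighted inner product. -/
noncomputable def ipNS (m n : ℤ) (hx hy : ℝ) (f g : ℤ → ℤ → ℝ) : ℝ :=
  hx * hy * ∑ i ∈ Icc (1:ℤ) m, ∑ j ∈ Icc (1:ℤ) n, aY (fun i j => f i j * g i j) i j

/-- periodicity of a grid function with periods m, n. -/
noncomputable def GridPeriodic (m n : ℤ) (φ : ℤ → ℤ → ℝ) : Prop :=
  (∀ i j, φ (i+m) j = φ i j) ∧ (∀ i j, φ i (j+n) = φ i j)


section Helpers

lemma combo_pos {a b x y : ℝ} (ha : 0 ≤ a) (hb : 0 ≤ b) (hab : a + b = 1)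
    (hx : 0 < x) (hy : 0 < y) : 0 < a * x + b * y := by
  rcases eq_or_lt_of_le ha with h | h
  · have hb1 : b = 1 := by linarith
    simp [← h, hb1, hy]
  · have : 0 < a * x := mul_pos h hx
    nlinarith [mul_nonneg hb hy.le]

lemma xlogx_ineq {a b x y : ℝ} (hx : 0 ≤ x) (hy : 0 ≤ y)
    (ha : 0 ≤ a) (hb : 0 ≤ b) (hab : a + b = 1) :
    (a*x + b*y) * Real.log (a*x + b*y) ≤ a * (x * Real.log x) + b * (y * Real.log y) := by
  have := Real.convexOn_mul_log.2 hx hy ha hb hab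
  simpa using this

/-- x ↦ x log(c x) convexity ineq for c > 0, x,y > 0. -/
lemma xlogcx_ineq {c a b x y : ℝ} (hc : 0 < c) (hx : 0 < x) (hy : 0 < y)
    (ha : 0 ≤ a) (hb : 0 ≤ b) (hab : a + b = 1) :
    (a*x + b*y) * Real.log (c * (a*x + b*y)) ≤
      a * (x * Real.log (c*x)) + b * (y * Real.log (c*y)) := by
  have hz : 0 < a*x + b*y := combo_pos ha hb hab hx hy
  rw [Real.log_mul hc.ne' hz.ne', Real.log_mul hc.ne' hx.ne', Real.log_mul hc.ne' hy.ne']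
  have h := xlogx_ineq hx.le hy.le ha hb hab
  nlinarith [h]

/-- quadratic over linear. -/
lemma qol {a b p q v w : ℝ} (hp : 0 < p) (hq : 0 < q)
    (ha : 0 ≤ a) (hb : 0 ≤ b) (hab : a + b = 1) :
    (a*v + b*w)^2 / (a*p + b*q) ≤ a * (v^2/p) + b * (w^2/q) := by
  have hd : 0 < a*p + b*q := combo_pos ha hb hab hp hq
  rw [div_le_iff₀ hd]
  have h1 : a * (v^2/p) = a * v^2 / p := by ring
  have h2 : b * (w^2/q) = b * w^2 / q := by ring
  rw [h1, h2, div_add_div _ _ hp.ne' hq.ne', div_mul_eq_mul_div, le_div_iff₀ (mul_pos hp hq)]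
  nlinarith [mul_nonneg (mul_nonneg ha hb) (sq_nonneg (v*q - w*p))]

end Helpers

section Helpers2

lemma kappa_split {u v : ℝ} (h0 : 0 < u) (h1 : u < 1) :
    1 / (36*u*(1-u)) * v^2 = v^2/(36*u) + v^2/(36*(1-u)) := by
  have h1' : (0:ℝ) < 1 - u := by linarith
  field_simp
  ring

/-- joint convexity of κ(u) v² on (0,1)×ℝ. -/
lemma K_conv {a b u1 u2 v1 v2 : ℝ}
    (hu1 : 0 < u1) (hu1' : u1 < 1) (hu2 : 0 < u2) (hu2' : u2 < 1)
    (ha : 0 ≤ a) (hb : 0 ≤ b) (hab : a + b = 1) :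
    1/(36*(a*u1+b*u2)*(1-(a*u1+b*u2))) * (a*v1+b*v2)^2 ≤
      a * (1/(36*u1*(1-u1)) * v1^2) + b * (1/(36*u2*(1-u2)) * v2^2) := by
  have hU : 0 < a*u1+b*u2 := combo_pos ha hb hab hu1 hu2
  have hU' : a*u1+b*u2 < 1 := by
    have := combo_pos ha hb hab (by linarith : (0:ℝ) < 1-u1) (by linarith : (0:ℝ) < 1-u2)
    nlinarith
  rw [kappa_split hU hU', kappa_split hu1 hu1', kappa_split hu2 hu2']
  have e1 : 36*(a*u1+b*u2) = a*(36*u1) + b*(36*u2) := by ring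
  have e2 : 36*(1-(a*u1+b*u2)) = a*(36*(1-u1)) + b*(36*(1-u2)) := by
    have : b = 1 - a := by linarith
    rw [this]; ring
  rw [e1, e2]
  have q1 := qol (a:=a) (b:=b) (v:=v1) (w:=v2)
    (by positivity : (0:ℝ) < 36*u1) (by positivity : (0:ℝ) < 36*u2) ha hb hab
  have q2 := qol (a:=a) (b:=b) (v:=v1) (w:=v2)
    (by nlinarith : (0:ℝ) < 36*(1-u1)) (by nlinarith : (0:ℝ) < 36*(1-u2)) ha hb hab
  linarith

end Helpers2

lemma S_conv {α β τ N ρ a b x y : ℝ} (hα : 0 < α) (hβ : 0 < β) (hτ : 0 < τ)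
    (hN : 0 < N) (hρ : 1 < ρ)
    (hx0 : 0 < x) (hx1 : x < 1/ρ) (hy0 : 0 < y) (hy1 : y < 1/ρ)
    (ha : 0 ≤ a) (hb : 0 ≤ b) (hab : a + b = 1) :
    (a*x+b*y)/τ * Real.log (α*(a*x+b*y)/τ) + (a*x+b*y)/N * Real.log (β*(a*x+b*y)/τ)
      + (1 - ρ*(a*x+b*y)) * Real.log (1 - ρ*(a*x+b*y))
    ≤ a * (x/τ * Real.log (α*x/τ) + x/N * Real.log (β*x/τ) + (1-ρ*x)*Real.log (1-ρ*x))
      + b * (y/τ * Real.log (α*y/τ) + y/N * Real.log (β*y/τ) + (1-ρ*y)*Real.log (1-ρ*y)) := by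
  have hρ0 : (0:ℝ) < ρ := by linarith
  have hx' : 0 < 1 - ρ*x := by
    have := (lt_div_iff₀ hρ0).1 hx1; nlinarith
  have hy' : 0 < 1 - ρ*y := by
    have := (lt_div_iff₀ hρ0).1 hy1; nlinarith
  have h1 := xlogcx_ineq (c := α/τ) (by positivity) hx0 hy0 ha hb hab
  have h2 := xlogcx_ineq (c := β/τ) (by positivity) hx0 hy0 ha hb hab
  have h3 := xlogx_ineq (x := 1-ρ*x) (y := 1-ρ*y) hx'.le hy'.le ha hb hab
  have e : a*(1-ρ*x)+b*(1-ρ*y) = 1-ρ*(a*x+b*y) := by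
    have hb' : b = 1 - a := by linarith
    rw [hb']; ring
  rw [e] at h3
  simp only [show ∀ z:ℝ, α*z/τ = α/τ*z from fun z => by ring,
             show ∀ z:ℝ, β*z/τ = β/τ*z from fun z => by ring]
  have h1' := mul_le_mul_of_nonneg_left h1 (le_of_lt (by positivity : (0:ℝ) < 1/τ))
  have h2' := mul_le_mul_of_nonneg_left h2 (le_of_lt (by positivity : (0:ℝ) < 1/N))
  have g1 : (a*x+b*y)/τ * Real.log (α/τ*(a*x+b*y)) = 1/τ*((a*x+b*y) * Real.log (α/τ*(a*x+b*y))) := by ring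
  have g2 : (a*x+b*y)/N * Real.log (β/τ*(a*x+b*y)) = 1/N*((a*x+b*y) * Real.log (β/τ*(a*x+b*y))) := by ring
  rw [g1, g2]
  ring_nf at h1' h2' h3 ⊢
  linarith [h1', h2', h3]

lemma H_conc {χ ρ a b x y : ℝ} (hχ : 0 < χ) (hρ : 0 < ρ)
    (ha : 0 ≤ a) (hb : 0 ≤ b) (hab : a + b = 1) :
    a*(χ*x*(1-ρ*x)) + b*(χ*y*(1-ρ*y)) ≤ χ*(a*x+b*y)*(1-ρ*(a*x+b*y)) := by
  have hb' : b = 1 - a := by linarith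
  subst hb'
  nlinarith [mul_nonneg (mul_nonneg hχ.le hρ.le)
    (mul_nonneg (mul_nonneg ha hb) (sq_nonneg (x-y)))]

lemma sum2_combo (s t : Finset ℤ) (f g : ℤ → ℤ → ℝ) (a b : ℝ) :
    a * (∑ i ∈ s, ∑ j ∈ t, f i j) + b * (∑ i ∈ s, ∑ j ∈ t, g i j)
      = ∑ i ∈ s, ∑ j ∈ t, (a * f i j + b * g i j) := by
  simp [Finset.mul_sum, Finset.sum_add_distrib]

lemma sum2_add (s t : Finset ℤ) (f g : ℤ → ℤ → ℝ) :
    (∑ i ∈ s, ∑ j ∈ t, f i j) + (∑ i ∈ s, ∑ j ∈ t, g i j)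
      = ∑ i ∈ s, ∑ j ∈ t, (f i j + g i j) := by
  simp [Finset.sum_add_distrib]

theorem discrete_energy_convex_splitting
    (m n : ℤ) (hm : 0 < m) (hn : 0 < n)
    (hx hy : ℝ) (hhx : 0 < hx) (hhy : 0 < hy)
    (α β τ N χ ρ : ℝ) (hα : 0 < α) (hβ : 0 < β) (hτ : 0 < τ)
    (hN : 0 < N) (hχ : 0 < χ) (hρ : 1 < ρ)
    (S H κ : ℝ → ℝ)
    (hS : S = fun φ => φ/τ * Real.log (α*φ/τ) + φ/N * Real.log (β*φ/τ)
        + (1 - ρ*φ) * Real.log (1 - ρ*φ))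
    (hH : H = fun φ => χ * φ * (1 - ρ*φ))
    (hκ : κ = fun φ => 1 / (36 * φ * (1 - φ)))
    (F Fc Fe : (ℤ → ℤ → ℝ) → ℝ)
    (hF : F = fun φ => hx * hy * ∑ i ∈ Finset.Icc (1:ℤ) m, ∑ j ∈ Finset.Icc (1:ℤ) n,
        (S (φ i j) + H (φ i j)
          + κ (φ i j) * (aX (fun i j => (Dx hx φ i j)^2) i j
                        + aY (fun i j => (Dy hy φ i j)^2) i j)))
    (hFc : Fc = fun φ => hx * hy * ∑ i ∈ Finset.Icc (1:ℤ) m, ∑ j ∈ Finset.Icc (1:ℤ) n,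
        (S (φ i j)
          + κ (φ i j) * (aX (fun i j => (Dx hx φ i j)^2) i j
                        + aY (fun i j => (Dy hy φ i j)^2) i j)))
    (hFe : Fe = fun φ => -(hx * hy * ∑ i ∈ Finset.Icc (1:ℤ) m, ∑ j ∈ Finset.Icc (1:ℤ) n,
        H (φ i j)))
    (Dset : Set (ℤ → ℤ → ℝ))
    (hDset : Dset = {φ | GridPeriodic m n φ ∧ ∀ i j, φ i j ∈ Set.Ioo (0:ℝ) (1/ρ)}) :
    (∀ φ ∈ Dset, F φ = Fc φ - Fe φ) ∧
    ConvexOn ℝ Dset Fc ∧ ConvexOn ℝ Dset Fe := by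
  -- MAIN PROOF BODY
  have hρ0 : (0:ℝ) < ρ := by linarith
  have hinv1 : (1:ℝ)/ρ < 1 := by rw [div_lt_one hρ0]; exact hρ
  -- convexity of the domain
  have hDconv : Convex ℝ Dset := by
    rw [hDset]
    intro φ hφ ψ hψ a b ha hb hab
    simp only [Set.mem_setOf_eq] at hφ hψ ⊢
    refine ⟨⟨?_, ?_⟩, ?_⟩
    · intro i j
      simp [Pi.add_apply, Pi.smul_apply, smul_eq_mul, hφ.1.1 i j, hψ.1.1 i j]
    · intro i j
      simp [Pi.add_apply, Pi.smul_apply, smul_eq_mul, hφ.1.2 i j, hψ.1.2 i j]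
    · intro i j
      have := (convex_Ioo (0:ℝ) (1/ρ)) (hφ.2 i j) (hψ.2 i j) ha hb hab
      simpa [Pi.add_apply, Pi.smul_apply, smul_eq_mul] using this
  refine ⟨?_, ⟨hDconv, ?_⟩, ⟨hDconv, ?_⟩⟩
  · -- F = Fc - Fe
    intro φ _
    rw [hF, hFc, hFe]
    simp only [sub_neg_eq_add, ← mul_add, sum2_add]
    congr 1
    apply Finset.sum_congr rfl; intro i _
    apply Finset.sum_congr rfl; intro j _
    ring
  · -- Fc convex
    intro φ hφ ψ hψ a b ha hb hab
    rw [hDset, Set.mem_setOf_eq] at hφ hψ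
    simp only [hFc, smul_eq_mul]
    rw [show a * (hx * hy * ∑ i ∈ Finset.Icc (1:ℤ) m, ∑ j ∈ Finset.Icc (1:ℤ) n,
          (S (φ i j) + κ (φ i j) * (aX (fun i j => (Dx hx φ i j)^2) i j
            + aY (fun i j => (Dy hy φ i j)^2) i j)))
        + b * (hx * hy * ∑ i ∈ Finset.Icc (1:ℤ) m, ∑ j ∈ Finset.Icc (1:ℤ) n,
          (S (ψ i j) + κ (ψ i j) * (aX (fun i j => (Dx hx ψ i j)^2) i j
            + aY (fun i j => (Dy hy ψ i j)^2) i j)))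
        = hx * hy * (a * (∑ i ∈ Finset.Icc (1:ℤ) m, ∑ j ∈ Finset.Icc (1:ℤ) n,
          (S (φ i j) + κ (φ i j) * (aX (fun i j => (Dx hx φ i j)^2) i j
            + aY (fun i j => (Dy hy φ i j)^2) i j)))
        + b * (∑ i ∈ Finset.Icc (1:ℤ) m, ∑ j ∈ Finset.Icc (1:ℤ) n,
          (S (ψ i j) + κ (ψ i j) * (aX (fun i j => (Dx hx ψ i j)^2) i j
            + aY (fun i j => (Dy hy ψ i j)^2) i j)))) from by ring,
      sum2_combo]
    apply mul_le_mul_of_nonneg_left _ (by positivity : (0:ℝ) ≤ hx * hy)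
    apply Finset.sum_le_sum; intro i _
    apply Finset.sum_le_sum; intro j _
    -- pointwise inequality
    have valU : ∀ i j : ℤ, (a • φ + b • ψ) i j = a * φ i j + b * ψ i j := by
      intro i j; simp [Pi.add_apply, Pi.smul_apply, smul_eq_mul]
    have DxU : ∀ i j : ℤ, Dx hx (a • φ + b • ψ) i j
        = a * Dx hx φ i j + b * Dx hx ψ i j := by
      intro i j; simp only [Dx, valU]; ring
    have DyU : ∀ i j : ℤ, Dy hy (a • φ + b • ψ) i j
        = a * Dy hy φ i j + b * Dy hy ψ i j := by
      intro i j; simp only [Dy, valU]; ring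
    obtain ⟨hx10, hx11⟩ := hφ.2 i j
    obtain ⟨hx20, hx21⟩ := hψ.2 i j
    have hu1' : φ i j < 1 := lt_trans hx11 hinv1
    have hu2' : ψ i j < 1 := lt_trans hx21 hinv1
    have k1 := K_conv (v1 := Dx hx φ i j) (v2 := Dx hx ψ i j)
      hx10 hu1' hx20 hu2' ha hb hab
    have k2 := K_conv (v1 := Dx hx φ (i-1) j) (v2 := Dx hx ψ (i-1) j)
      hx10 hu1' hx20 hu2' ha hb hab
    have k3 := K_conv (v1 := Dy hy φ i j) (v2 := Dy hy ψ i j)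
      hx10 hu1' hx20 hu2' ha hb hab
    have k4 := K_conv (v1 := Dy hy φ i (j-1)) (v2 := Dy hy ψ i (j-1))
      hx10 hu1' hx20 hu2' ha hb hab
    have hs := S_conv (α := α) (β := β) (τ := τ) (N := N) (ρ := ρ)
      (x := φ i j) (y := ψ i j) hα hβ hτ hN hρ hx10 hx11 hx20 hx21 ha hb hab
    simp only [hS, hκ, aX, aY, valU, DxU, DyU]
    linarith [k1, k2, k3, k4, hs]
  · -- Fe convex
    intro φ hφ ψ hψ a b ha hb hab
    rw [hDset, Set.mem_setOf_eq] at hφ hψ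
    simp only [hFe, hH, smul_eq_mul]
    have valU : ∀ i j : ℤ, (a • φ + b • ψ) i j = a * φ i j + b * ψ i j := by
      intro i j; simp [Pi.add_apply, Pi.smul_apply, smul_eq_mul]
    have key : a * (∑ i ∈ Finset.Icc (1:ℤ) m, ∑ j ∈ Finset.Icc (1:ℤ) n,
          χ * φ i j * (1 - ρ * φ i j))
        + b * (∑ i ∈ Finset.Icc (1:ℤ) m, ∑ j ∈ Finset.Icc (1:ℤ) n,
          χ * ψ i j * (1 - ρ * ψ i j))
        ≤ ∑ i ∈ Finset.Icc (1:ℤ) m, ∑ j ∈ Finset.Icc (1:ℤ) n,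
          χ * ((a • φ + b • ψ) i j) * (1 - ρ * ((a • φ + b • ψ) i j)) := by
      rw [sum2_combo]
      apply Finset.sum_le_sum; intro i _
      apply Finset.sum_le_sum; intro j _
      rw [valU]
      exact H_conc hχ hρ0 ha hb hab
    linarith [mul_le_mul_of_nonneg_left key (by positivity : (0:ℝ) ≤ hx * hy)]
end
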